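/- Suppose ω(a,b;c,d) = ω(b,a;d,c) for all a,b,c,d ∈ Fin 2 (so that the column transfer matrix V is symmetric), and suppose Tr(R^m) > 0. Then the largest eigenvalue Λ(m) of V satisfies Λ(m) ≥ Tr(S^m) / Tr(R^m). -/

import Mathlib

/-- The column transfer matrix `V`, indexed by `Fin m → Fin 2`, with
`V(σ,τ) = Π_i ω(σ(i+1),τ(i+1);σ(i),τ(i))` (indices cyclic modulo `m`); the
face weight `ω a b c d` means `ω(a,b;c,d)` with top row `a,b` and bottom row
`c,d`. -/
def Vmat (m : ℕ) (ω : Fin 2 → Fin 2 → Fin 2 → Fin 2 → ℝ) :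
    Matrix (Fin m → Fin 2) (Fin m → Fin 2) ℝ :=
  Matrix.of fun σ τ =>
    ∏ i : Fin m, ω (σ (finRotate m i)) (τ (finRotate m i)) (σ i) (τ i)

/-- The matrix `R`, indexed by `Fin n × Fin 2 × Fin n`, with
`R((α,a,α'),(β,b,β')) = F(a,b)(α,β) · F(a,b)(α',β')`. -/
def Rmat (n : ℕ) (F : Fin 2 → Fin 2 → Matrix (Fin n) (Fin n) ℝ) :
    Matrix (Fin n × Fin 2 × Fin n) (Fin n × Fin 2 × Fin n) ℝ :=
  Matrix.of fun p q => F p.2.1 q.2.1 p.1 q.1 * F p.2.1 q.2.1 p.2.2 q.2.2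

/-- The matrix `S`, indexed by `Fin n × (Fin 2 × Fin 2) × Fin n`, with
`S((α,(a,a'),α'),(β,(b,b'),β')) = F(a,b)(α,β) · ω(b,b';a,a') · F(a',b')(α',β')`. -/
def Smat (n : ℕ) (F : Fin 2 → Fin 2 → Matrix (Fin n) (Fin n) ℝ)
    (ω : Fin 2 → Fin 2 → Fin 2 → Fin 2 → ℝ) :
    Matrix (Fin n × (Fin 2 × Fin 2) × Fin n) (Fin n × (Fin 2 × Fin 2) × Fin n) ℝ :=
  Matrix.of fun p q =>
    F p.2.1.1 q.2.1.1 p.1 q.1 * ω q.2.1.1 q.2.1.2 p.2.1.1 p.2.1.2 *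
      F p.2.1.2 q.2.1.2 p.2.2 q.2.2

open Matrix Finset

section TracePow
variable {ι : Type*} [Fintype ι] [DecidableEq ι]

private def pathFn {m : ℕ} (i j : ι) (f : Fin m → ι) : Fin (m + 2) → ι :=
  Fin.cons i (Fin.snoc f j)

/-- Entry of a matrix power as a sum over paths. -/
lemma pow_succ_apply_tr (A : Matrix ι ι ℝ) (m : ℕ) (i j : ι) :
    (A ^ (m + 1)) i j =
      ∑ f : Fin m → ι, ∏ t : Fin (m + 1),
        A (pathFn i j f t.castSucc) (pathFn i j f t.succ) := by
  induction m generalizing j with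
  | zero =>
    conv_lhs => rw [zero_add, pow_one]
    rw [Fintype.sum_subsingleton _ (default : Fin 0 → ι), Fin.prod_univ_one]
    have h1 : pathFn i j (default : Fin 0 → ι) ((0 : Fin 1).succ) = j := by
      unfold pathFn
      rw [show ((0 : Fin 1).succ) = Fin.succ (0 : Fin 1) from rfl, Fin.cons_succ]
      rw [show (0 : Fin 1) = Fin.last 0 from rfl, Fin.snoc_last]
    rw [h1]
    rfl
  | succ m ih =>
    rw [pow_succ, Matrix.mul_apply]
    calc (∑ x, (A ^ (m+1)) i x * A x j)
        = ∑ x, ∑ f : Fin m → ι, (∏ t : Fin (m + 1),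
            A (pathFn i x f t.castSucc) (pathFn i x f t.succ)) * A x j := by
          simp_rw [ih, Finset.sum_mul]
      _ = ∑ p : ι × (Fin m → ι), (∏ t : Fin (m + 1),
            A (pathFn i p.1 p.2 t.castSucc) (pathFn i p.1 p.2 t.succ)) * A p.1 j := by
          rw [Fintype.sum_prod_type]
      _ = ∑ f : Fin (m+1) → ι, ∏ t : Fin (m + 2),
            A (pathFn i j f t.castSucc) (pathFn i j f t.succ) := by
          apply Fintype.sum_equiv (Fin.snocEquiv (fun _ => ι))
          rintro ⟨x, f⟩
          have hsnoc : (Fin.snocEquiv (fun _ => ι)) (x, f) = Fin.snoc f x := rfl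
          rw [hsnoc]
          have hg : pathFn i j (Fin.snoc f x) = Fin.snoc (pathFn i x f) j := by
            unfold pathFn
            exact Fin.cons_snoc_eq_snoc_cons _ _ _
          rw [hg]
          conv_rhs => rw [Fin.prod_univ_castSucc]
          congr 1
          · apply Finset.prod_congr rfl
            intro t _
            rw [Fin.succ_castSucc, Fin.snoc_castSucc, Fin.snoc_castSucc]
          · rw [Fin.succ_last, Fin.snoc_last]
            congr 1
            have : (Fin.last (m+1)).castSucc = (Fin.last m).castSucc.succ := by
              rw [Fin.succ_castSucc]; rfl
            rw [this, Fin.succ_castSucc, Fin.snoc_castSucc]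
            show (x, f).1 = pathFn i x f (Fin.succ (Fin.last m))
            unfold pathFn
            rw [Fin.cons_succ, Fin.snoc_last]

omit [Fintype ι] [DecidableEq ι] in
lemma snoc_cycle {m : ℕ} (h : Fin (m + 1) → ι) (t : Fin (m + 1)) :
    (Fin.snoc h (h 0) : Fin (m+2) → ι) t.succ = h (t + 1) := by
  induction t using Fin.lastCases with
  | last =>
    rw [Fin.succ_last]
    rw [show (Fin.snoc h (h 0) : Fin (m+2) → ι) (Fin.last (m+1)) = h 0 from Fin.snoc_last _ _]
    rw [Fin.last_add_one]
  | cast s =>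
    rw [Fin.succ_castSucc, Fin.snoc_castSucc, Fin.coeSucc_eq_succ]

/-- Trace of a matrix power as a sum over closed cyclic paths. -/
lemma trace_pow_eq (A : Matrix ι ι ℝ) (m : ℕ) :
    Matrix.trace (A ^ (m + 1)) =
      ∑ g : Fin (m + 1) → ι, ∏ i : Fin (m + 1), A (g i) (g (finRotate (m + 1) i)) := by
  rw [Matrix.trace]
  simp_rw [Matrix.diag_apply, pow_succ_apply_tr]
  rw [← Fintype.sum_prod_type']
  apply Fintype.sum_equiv (Fin.consEquiv (fun _ => ι))
  rintro ⟨j, f⟩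
  have hc : (Fin.consEquiv (fun _ => ι)) (j, f) = Fin.cons j f := rfl
  rw [hc]
  have hg : pathFn j j f = Fin.snoc (Fin.cons j f : Fin (m+1) → ι) j := by
    unfold pathFn
    exact Fin.cons_snoc_eq_snoc_cons _ _ _
  rw [hg]
  apply Finset.prod_congr rfl
  intro t _
  rw [Fin.snoc_castSucc, finRotate_succ_apply]
  congr 1
  exact snoc_cycle (Fin.cons j f) t

/-- Rayleigh-quotient bound for a real symmetric matrix. -/
lemma rayleigh_le {A : Matrix ι ι ℝ} (hA : A.IsHermitian) (x : ι → ℝ) {Λ : ℝ}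
    (hΛ : ∀ i, hA.eigenvalues i ≤ Λ) :
    x ⬝ᵥ (A *ᵥ x) ≤ Λ * (x ⬝ᵥ x) := by
  set U : Matrix ι ι ℝ := (hA.eigenvectorUnitary : Matrix ι ι ℝ) with hU
  set D : Matrix ι ι ℝ := Matrix.diagonal (RCLike.ofReal ∘ hA.eigenvalues) with hD
  have hUU : U * star U = 1 := (Matrix.mem_unitaryGroup_iff).mp hA.eigenvectorUnitary.2
  set y : ι → ℝ := (star U) *ᵥ x with hy
  have hyv : y = Matrix.vecMul x U := by
    rw [hy, Matrix.star_eq_conjTranspose, Matrix.conjTranspose_eq_transpose_of_trivial,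
      Matrix.mulVec_transpose]
  have h1 : x ⬝ᵥ (A *ᵥ x) = y ⬝ᵥ (D *ᵥ y) := by
    conv_lhs => rw [hA.spectral_theorem, Unitary.conjStarAlgAut_apply]
    rw [← hU, ← hD, ← Matrix.mulVec_mulVec, ← Matrix.mulVec_mulVec,
      Matrix.dotProduct_mulVec x U, ← hyv, ← hy]
  have h2 : x ⬝ᵥ x = y ⬝ᵥ y := by
    conv_lhs => rw [show x ⬝ᵥ x = x ⬝ᵥ (1 *ᵥ x) by rw [Matrix.one_mulVec]]
    rw [← hUU, ← Matrix.mulVec_mulVec, Matrix.dotProduct_mulVec x U, ← hyv, ← hy]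
  rw [h1, h2]
  have hDy : ∀ i, (D *ᵥ y) i = hA.eigenvalues i * y i := by
    intro i
    rw [hD, Matrix.mulVec_diagonal]
    rfl
  rw [dotProduct, dotProduct, Finset.mul_sum]
  apply Finset.sum_le_sum
  intro i _
  rw [hDy]
  have : y i * (hA.eigenvalues i * y i) = hA.eigenvalues i * (y i * y i) := by ring
  rw [this]
  exact mul_le_mul_of_nonneg_right (hΛ i) (mul_self_nonneg _)

end TracePow

/-- The equivalence combining three sequences into one sequence of triples. -/
def tripleEquiv (X A B C : Type*) : ((X → A) × (X → B) × (X → C)) ≃ (X → A × B × C) where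
  toFun p := fun i => (p.1 i, p.2.1 i, p.2.2 i)
  invFun g := (fun i => (g i).1, fun i => (g i).2.1, fun i => (g i).2.2)
  left_inv _ := rfl
  right_inv _ := rfl

/-- The equivalence combining four sequences into one sequence of quadruples. -/
def quadEquiv (X A B C D : Type*) :
    ((X → A) × ((X → B) × (X → C)) × (X → D)) ≃ (X → A × (B × C) × D) where
  toFun p := fun i => (p.1 i, (p.2.1.1 i, p.2.1.2 i), p.2.2 i)
  invFun g := (fun i => (g i).1, (fun i => (g i).2.1.1, fun i => (g i).2.1.2),
    fun i => (g i).2.2)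
  left_inv _ := rfl
  right_inv _ := rfl

/-- The vector (indexed by `Fin m → Fin 2`) whose Rayleigh quotient for `V` gives
the ratio `Tr(S^m)/Tr(R^m)`; `xvec σ = Tr(Π_i F(σ_i, σ_{i+1}))` written as a sum
over cyclical paths. -/
noncomputable def xvec (n m : ℕ) (F : Fin 2 → Fin 2 → Matrix (Fin n) (Fin n) ℝ)
    (σ : Fin m → Fin 2) : ℝ :=
  ∑ α : Fin m → Fin n, ∏ i : Fin m,
    F (σ i) (σ (finRotate m i)) (α i) (α (finRotate m i))

lemma traceR (n k : ℕ) (F : Fin 2 → Fin 2 → Matrix (Fin n) (Fin n) ℝ) :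
    Matrix.trace (Rmat n F ^ (k + 1)) =
      ∑ σ : Fin (k + 1) → Fin 2, xvec n (k+1) F σ * xvec n (k+1) F σ := by
  rw [trace_pow_eq]
  rw [← Fintype.sum_equiv (tripleEquiv (Fin (k+1)) (Fin n) (Fin 2) (Fin n))
    (fun p => ∏ i : Fin (k+1), Rmat n F (tripleEquiv _ _ _ _ p i)
      (tripleEquiv _ _ _ _ p (finRotate (k+1) i)))
    (fun g => ∏ i : Fin (k+1), Rmat n F (g i) (g (finRotate (k+1) i))) (fun _ => rfl)]
  have key : ∀ p : (Fin (k+1) → Fin n) × (Fin (k+1) → Fin 2) × (Fin (k+1) → Fin n),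
      (∏ i : Fin (k+1), Rmat n F (tripleEquiv _ _ _ _ p i)
        (tripleEquiv _ _ _ _ p (finRotate (k+1) i))) =
      (∏ i : Fin (k+1), F (p.2.1 i) (p.2.1 (finRotate (k+1) i)) (p.1 i)
        (p.1 (finRotate (k+1) i))) *
      (∏ i : Fin (k+1), F (p.2.1 i) (p.2.1 (finRotate (k+1) i)) (p.2.2 i)
        (p.2.2 (finRotate (k+1) i))) := by
    intro p
    rw [← Finset.prod_mul_distrib]
    rfl
  simp_rw [key]
  rw [Fintype.sum_prod_type]
  rw [Finset.sum_comm]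
  rw [Fintype.sum_prod_type]
  apply Finset.sum_congr rfl
  intro σ _
  dsimp only
  rw [Finset.sum_comm, ← Finset.sum_mul_sum]
  rfl

lemma traceS (n k : ℕ) (F : Fin 2 → Fin 2 → Matrix (Fin n) (Fin n) ℝ)
    (ω : Fin 2 → Fin 2 → Fin 2 → Fin 2 → ℝ) :
    Matrix.trace (Smat n F ω ^ (k + 1)) =
      ∑ σ : Fin (k + 1) → Fin 2, ∑ τ : Fin (k + 1) → Fin 2,
        xvec n (k+1) F σ * Vmat (k+1) ω σ τ * xvec n (k+1) F τ := by
  rw [trace_pow_eq]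
  rw [← Fintype.sum_equiv (quadEquiv (Fin (k+1)) (Fin n) (Fin 2) (Fin 2) (Fin n))
    (fun p => ∏ i : Fin (k+1), Smat n F ω (quadEquiv _ _ _ _ _ p i)
      (quadEquiv _ _ _ _ _ p (finRotate (k+1) i)))
    (fun g => ∏ i : Fin (k+1), Smat n F ω (g i) (g (finRotate (k+1) i))) (fun _ => rfl)]
  have key : ∀ p : (Fin (k+1) → Fin n) × ((Fin (k+1) → Fin 2) × (Fin (k+1) → Fin 2)) ×
      (Fin (k+1) → Fin n),
      (∏ i : Fin (k+1), Smat n F ω (quadEquiv _ _ _ _ _ p i)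
        (quadEquiv _ _ _ _ _ p (finRotate (k+1) i))) =
      (∏ i : Fin (k+1), F (p.2.1.1 i) (p.2.1.1 (finRotate (k+1) i)) (p.1 i)
          (p.1 (finRotate (k+1) i))) *
      (∏ i : Fin (k+1), ω (p.2.1.1 (finRotate (k+1) i)) (p.2.1.2 (finRotate (k+1) i))
          (p.2.1.1 i) (p.2.1.2 i)) *
      (∏ i : Fin (k+1), F (p.2.1.2 i) (p.2.1.2 (finRotate (k+1) i)) (p.2.2 i)
          (p.2.2 (finRotate (k+1) i))) := by
    intro p
    rw [← Finset.prod_mul_distrib, ← Finset.prod_mul_distrib]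
    rfl
  simp_rw [key]
  rw [Fintype.sum_prod_type]
  simp_rw [Fintype.sum_prod_type]
  rw [Finset.sum_comm]
  apply Finset.sum_congr rfl
  intro σ _
  rw [Finset.sum_comm]
  apply Finset.sum_congr rfl
  intro τ _
  rw [← Finset.sum_mul_sum, ← Finset.sum_mul]
  rfl

/-- If `ω(a,b;c,d) = ω(b,a;d,c)` (so that `V` is symmetric) and
`Tr(R^m) > 0`, then the largest eigenvalue `Λ(m)` of `V` satisfies
`Λ(m) ≥ Tr(S^m) / Tr(R^m)`. -/
theorem largest_eigenvalue_V_ge_trace_ratio (n m : ℕ) (hn : 1 ≤ n) (hm : 1 ≤ m)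
    (F : Fin 2 → Fin 2 → Matrix (Fin n) (Fin n) ℝ)
    (ω : Fin 2 → Fin 2 → Fin 2 → Fin 2 → ℝ)
    (hω : ∀ a b c d : Fin 2, ω a b c d = ω b a d c)
    (hR : 0 < Matrix.trace (Rmat n F ^ m)) :
    ∃ Λ : ℝ, IsGreatest (spectrum ℝ (Vmat m ω)) Λ ∧
      Matrix.trace (Smat n F ω ^ m) / Matrix.trace (Rmat n F ^ m) ≤ Λ := by
  obtain ⟨k, rfl⟩ : ∃ k, m = k + 1 := ⟨m - 1, (Nat.succ_pred_eq_of_pos hm).symm⟩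
  have hV : (Vmat (k+1) ω).IsHermitian := by
    show (Vmat (k+1) ω)ᴴ = Vmat (k+1) ω
    ext σ τ
    rw [Matrix.conjTranspose_apply]
    show star (Vmat (k+1) ω τ σ) = Vmat (k+1) ω σ τ
    rw [star_trivial]
    show (∏ i : Fin (k+1), ω (τ (finRotate (k+1) i)) (σ (finRotate (k+1) i)) (τ i) (σ i)) = _
    exact Finset.prod_congr rfl fun i _ => (hω _ _ _ _).symm
  have hne : (Finset.univ : Finset (Fin (k+1) → Fin 2)).Nonempty := Finset.univ_nonempty
  set Λ : ℝ := Finset.univ.sup' hne hV.eigenvalues with hΛdef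
  have hub : ∀ i, hV.eigenvalues i ≤ Λ := fun i => Finset.le_sup' _ (Finset.mem_univ i)
  refine ⟨Λ, ⟨?_, ?_⟩, ?_⟩
  · rw [Matrix.IsHermitian.spectrum_real_eq_range_eigenvalues hV]
    obtain ⟨i, _, hi⟩ := Finset.exists_mem_eq_sup' hne hV.eigenvalues
    exact ⟨i, hi.symm⟩
  · intro a ha
    rw [Matrix.IsHermitian.spectrum_real_eq_range_eigenvalues hV] at ha
    obtain ⟨i, rfl⟩ := ha
    exact hub i
  · rw [div_le_iff₀ hR, traceS, traceR]
    set x := xvec n (k+1) F with hx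
    calc (∑ σ : Fin (k+1) → Fin 2, ∑ τ : Fin (k+1) → Fin 2, x σ * Vmat (k+1) ω σ τ * x τ)
        = x ⬝ᵥ (Vmat (k+1) ω *ᵥ x) := by
          simp only [dotProduct, Matrix.mulVec, Finset.mul_sum, mul_assoc]
      _ ≤ Λ * (x ⬝ᵥ x) := rayleigh_le hV x hub
      _ = Λ * ∑ σ : Fin (k+1) → Fin 2, x σ * x σ := rfl
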